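/- Each left Casimir C^[m] (for m = 2,…,n) Poisson commutes with each of the n-dimensional sl(2,ℝ) generators J₊ = (|p|² + Σⱼ aⱼ/xⱼ²)/2, J₋ = |x|²/2, J₃ = (x·p)/2: {C^[m], J₊} = {C^[m], J₋} = {C^[m], J₃} = 0. -/

import Mathlib

open Finset

/-- Canonical Poisson bracket on the phase space ℝ²ⁿ. -/
noncomputable def pb (n : ℕ) (f g : (Fin n → ℝ) → (Fin n → ℝ) → ℝ)
    (x p : Fin n → ℝ) : ℝ :=
  ∑ j, (deriv (fun t => f (Function.update x j t) p) (x j) *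
        deriv (fun t => g x (Function.update p j t)) (p j) -
        deriv (fun t => f x (Function.update p j t)) (p j) *
        deriv (fun t => g (Function.update x j t) p) (x j))

/-- The left Casimir `C^[m]` of the sl(2) coalgebra in the given realisation. -/
noncomputable def CL (n : ℕ) (a : Fin n → ℝ) (m : ℕ)
    (x p : Fin n → ℝ) : ℝ :=
  -(1 / 4) * ((∑ i : Fin n, ∑ j : Fin n, if i < j ∧ (j : ℕ) < m then
      (x i * p j - x j * p i) ^ 2 + a i * (x j) ^ 2 / (x i) ^ 2 +
        a j * (x i) ^ 2 / (x j) ^ 2 else 0)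
    + ∑ i : Fin n, if (i : ℕ) < m then a i else 0)

lemma hasDerivAt_upd {n : ℕ} (x : Fin n → ℝ) (j l : Fin n) :
    HasDerivAt (fun t => Function.update x j t l) (if l = j then (1:ℝ) else 0) (x j) := by
  rcases eq_or_ne l j with h | h
  · subst h
    rw [if_pos rfl]
    have h2 : (fun t => Function.update x l t l) = fun t => t := by
      funext t; simp
    rw [h2]; exact hasDerivAt_id _
  · have h2 : (fun t => Function.update x j t l) = fun _ => x l := by
      funext t; simp [Function.update_of_ne h]
    rw [h2, if_neg h]; exact hasDerivAt_const _ _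

noncomputable def fpair {n : ℕ} (a : Fin n → ℝ) (i k : Fin n) (x p : Fin n → ℝ) : ℝ :=
  (x i * p k - x k * p i) ^ 2 + a i * (x k) ^ 2 / (x i) ^ 2 + a k * (x i) ^ 2 / (x k) ^ 2

noncomputable def dxf {n : ℕ} (a : Fin n → ℝ) (i k j : Fin n) (x p : Fin n → ℝ) : ℝ :=
  2 * (x i * p k - x k * p i) *
      ((if i = j then (1:ℝ) else 0) * p k - (if k = j then (1:ℝ) else 0) * p i)
    + (a i * (2 * x k * (if k = j then (1:ℝ) else 0)) * (x i) ^ 2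
        - a i * (x k) ^ 2 * (2 * x i * (if i = j then (1:ℝ) else 0))) / ((x i) ^ 2) ^ 2
    + (a k * (2 * x i * (if i = j then (1:ℝ) else 0)) * (x k) ^ 2
        - a k * (x i) ^ 2 * (2 * x k * (if k = j then (1:ℝ) else 0))) / ((x k) ^ 2) ^ 2

noncomputable def dpf {n : ℕ} (a : Fin n → ℝ) (i k j : Fin n) (x p : Fin n → ℝ) : ℝ :=
  2 * (x i * p k - x k * p i) *
      (x i * (if k = j then (1:ℝ) else 0) - x k * (if i = j then (1:ℝ) else 0))

lemma hasDerivAt_fpair_x {n : ℕ} (a : Fin n → ℝ) (i k j : Fin n) (x p : Fin n → ℝ)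
    (hxi : x i ≠ 0) (hxk : x k ≠ 0) :
    HasDerivAt (fun t => fpair a i k (Function.update x j t) p) (dxf a i k j x p) (x j) := by
  have hi := hasDerivAt_upd x j i
  have hk := hasDerivAt_upd x j k
  have hL := ((hi.mul_const (p k)).sub (hk.mul_const (p i))).pow 2
  have h2 := ((hk.pow 2).const_mul (a i)).div (hi.pow 2)
    (by simpa using pow_ne_zero 2 hxi)
  have h3 := ((hi.pow 2).const_mul (a k)).div (hk.pow 2)
    (by simpa using pow_ne_zero 2 hxk)
  have h := (hL.add h2).add h3
  refine h.congr_deriv ?_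
  simp only [Function.update_eq_self, Pi.sub_apply, Pi.pow_apply, Function.update_self, dxf, pow_one, Nat.cast_ofNat]
  ring

lemma hasDerivAt_fpair_p {n : ℕ} (a : Fin n → ℝ) (i k j : Fin n) (x p : Fin n → ℝ) :
    HasDerivAt (fun t => fpair a i k x (Function.update p j t)) (dpf a i k j x p) (p j) := by
  have hi := hasDerivAt_upd p j i
  have hk := hasDerivAt_upd p j k
  have hL := ((hk.const_mul (x i)).sub (hi.const_mul (x k))).pow 2
  have h := (hL.add_const (a i * (x k) ^ 2 / (x i) ^ 2)).add_const (a k * (x i) ^ 2 / (x k) ^ 2)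
  refine h.congr_deriv ?_
  simp only [Function.update_eq_self, Pi.sub_apply, Pi.pow_apply, Function.update_self, dpf, pow_one, Nat.cast_ofNat]
  ring

lemma hasDerivAt_CL_x {n : ℕ} (a : Fin n → ℝ) (m : ℕ) (x p : Fin n → ℝ)
    (hx : ∀ l, x l ≠ 0) (j : Fin n) :
    HasDerivAt (fun t => CL n a m (Function.update x j t) p)
      (-(1/4) * ∑ i : Fin n, ∑ k : Fin n,
        if i < k ∧ (k : ℕ) < m then dxf a i k j x p else 0) (x j) := by
  have hsum : HasDerivAt
      (fun t => ∑ i : Fin n, ∑ k : Fin n,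
        if i < k ∧ (k : ℕ) < m then fpair a i k (Function.update x j t) p else 0)
      (∑ i : Fin n, ∑ k : Fin n, if i < k ∧ (k : ℕ) < m then dxf a i k j x p else 0)
      (x j) := by
    apply HasDerivAt.fun_sum; intro i _
    apply HasDerivAt.fun_sum; intro k _
    by_cases h : i < k ∧ (k : ℕ) < m
    · simp only [if_pos h]; exact hasDerivAt_fpair_x a i k j x p (hx i) (hx k)
    · simp only [if_neg h]; exact hasDerivAt_const _ _
  exact (hsum.add_const (∑ i : Fin n, if (i : ℕ) < m then a i else 0)).const_mul (-(1/4) : ℝ)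

lemma hasDerivAt_CL_p {n : ℕ} (a : Fin n → ℝ) (m : ℕ) (x p : Fin n → ℝ) (j : Fin n) :
    HasDerivAt (fun t => CL n a m x (Function.update p j t))
      (-(1/4) * ∑ i : Fin n, ∑ k : Fin n,
        if i < k ∧ (k : ℕ) < m then dpf a i k j x p else 0) (p j) := by
  have hsum : HasDerivAt
      (fun t => ∑ i : Fin n, ∑ k : Fin n,
        if i < k ∧ (k : ℕ) < m then fpair a i k x (Function.update p j t) else 0)
      (∑ i : Fin n, ∑ k : Fin n, if i < k ∧ (k : ℕ) < m then dpf a i k j x p else 0)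
      (p j) := by
    apply HasDerivAt.fun_sum; intro i _
    apply HasDerivAt.fun_sum; intro k _
    by_cases h : i < k ∧ (k : ℕ) < m
    · simp only [if_pos h]; exact hasDerivAt_fpair_p a i k j x p
    · simp only [if_neg h]; exact hasDerivAt_const _ _
  exact (hsum.add_const (∑ i : Fin n, if (i : ℕ) < m then a i else 0)).const_mul (-(1/4) : ℝ)

lemma main_lemma {n : ℕ} (a : Fin n → ℝ) (m : ℕ) (x p : Fin n → ℝ)
    (hx : ∀ l, x l ≠ 0) (g : (Fin n → ℝ) → (Fin n → ℝ) → ℝ) (Gx Gp : Fin n → ℝ)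
    (hgx : ∀ j, deriv (fun t => g (Function.update x j t) p) (x j) = Gx j)
    (hgp : ∀ j, deriv (fun t => g x (Function.update p j t)) (p j) = Gp j)
    (key : ∀ i k : Fin n, i < k →
      ∑ j, (dxf a i k j x p * Gp j - dpf a i k j x p * Gx j) = 0) :
    pb n (CL n a m) g x p = 0 := by
  have hCx : ∀ j, deriv (fun t => CL n a m (Function.update x j t) p) (x j)
      = -(1/4) * ∑ i : Fin n, ∑ k : Fin n,
          if i < k ∧ (k : ℕ) < m then dxf a i k j x p else 0 :=
    fun j => (hasDerivAt_CL_x a m x p hx j).deriv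
  have hCp : ∀ j, deriv (fun t => CL n a m x (Function.update p j t)) (p j)
      = -(1/4) * ∑ i : Fin n, ∑ k : Fin n,
          if i < k ∧ (k : ℕ) < m then dpf a i k j x p else 0 :=
    fun j => (hasDerivAt_CL_p a m x p j).deriv
  have step1 : ∀ j : Fin n,
      deriv (fun t => CL n a m (Function.update x j t) p) (x j) *
        deriv (fun t => g x (Function.update p j t)) (p j) -
      deriv (fun t => CL n a m x (Function.update p j t)) (p j) *
        deriv (fun t => g (Function.update x j t) p) (x j)
      = ∑ i : Fin n, ∑ k : Fin n, (if i < k ∧ (k : ℕ) < m then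
          -(1/4) * (dxf a i k j x p * Gp j - dpf a i k j x p * Gx j) else 0) := by
    intro j
    rw [hCx j, hCp j, hgx j, hgp j]
    simp only [Finset.mul_sum, Finset.sum_mul, ← Finset.sum_sub_distrib]
    refine Finset.sum_congr rfl fun i _ => Finset.sum_congr rfl fun k _ => ?_
    split_ifs with h <;> ring
  show (∑ j : Fin n, _) = 0
  rw [Finset.sum_congr rfl fun j _ => step1 j, Finset.sum_comm]
  refine Finset.sum_eq_zero fun i _ => ?_
  rw [Finset.sum_comm]
  refine Finset.sum_eq_zero fun k _ => ?_
  by_cases h : i < k ∧ (k : ℕ) < m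
  · simp only [if_pos h, ← Finset.mul_sum, key i k h.1, mul_zero]
  · simp [if_neg h]

lemma sum_two {n : ℕ} (F : Fin n → ℝ) (i k : Fin n) (hik : i ≠ k)
    (h0 : ∀ j, j ≠ i → j ≠ k → F j = 0) : ∑ j, F j = F i + F k := by
  rw [← Finset.sum_subset (Finset.subset_univ ({i, k} : Finset (Fin n)))
    (fun j _ hj => by
      simp only [Finset.mem_insert, Finset.mem_singleton, not_or] at hj
      exact h0 j hj.1 hj.2)]
  exact Finset.sum_pair hik

lemma key_zero {n : ℕ} (a : Fin n → ℝ) (i k : Fin n) (x p : Fin n → ℝ)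
    (hik : i ≠ k) (j : Fin n) (h1 : j ≠ i) (h2 : j ≠ k) (Gx Gp : ℝ) :
    dxf a i k j x p * Gp - dpf a i k j x p * Gx = 0 := by
  simp [dxf, dpf, Ne.symm h1, Ne.symm h2]

lemma key1 {n : ℕ} (a : Fin n → ℝ) (i k : Fin n) (x p : Fin n → ℝ)
    (hik : i < k) (hxi : x i ≠ 0) (hxk : x k ≠ 0) :
    ∑ j, (dxf a i k j x p * p j - dpf a i k j x p * (-(a j) / (x j) ^ 3)) = 0 := by
  rw [sum_two _ i k hik.ne (fun j h1 h2 => key_zero a i k x p hik.ne j h1 h2 _ _)]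
  simp only [dxf, dpf, if_pos rfl, if_neg hik.ne, if_neg hik.ne']
  field_simp
  ring

lemma key2 {n : ℕ} (a : Fin n → ℝ) (i k : Fin n) (x p : Fin n → ℝ)
    (hik : i < k) :
    ∑ j, (dxf a i k j x p * 0 - dpf a i k j x p * x j) = 0 := by
  rw [sum_two _ i k hik.ne (fun j h1 h2 => key_zero a i k x p hik.ne j h1 h2 _ _)]
  simp only [dxf, dpf, if_pos rfl, if_neg hik.ne, if_neg hik.ne']
  ring

lemma key3 {n : ℕ} (a : Fin n → ℝ) (i k : Fin n) (x p : Fin n → ℝ)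
    (hik : i < k) (hxi : x i ≠ 0) (hxk : x k ≠ 0) :
    ∑ j, (dxf a i k j x p * (x j / 2) - dpf a i k j x p * (p j / 2)) = 0 := by
  rw [sum_two _ i k hik.ne (fun j h1 h2 => key_zero a i k x p hik.ne j h1 h2 _ _)]
  simp only [dxf, dpf, if_pos rfl, if_neg hik.ne, if_neg hik.ne']
  field_simp
  ring

-- g derivative lemmas
lemma hg1x {n : ℕ} (a : Fin n → ℝ) (x p : Fin n → ℝ) (hx : ∀ l, x l ≠ 0) (j : Fin n) :
    HasDerivAt (fun t => ((∑ l, (p l) ^ 2) + ∑ l, a l / (Function.update x j t l) ^ 2) / 2)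
      (-(a j) / (x j) ^ 3) (x j) := by
  have hl : ∀ l : Fin n, HasDerivAt (fun t => a l / (Function.update x j t l) ^ 2)
      (if l = j then -(2 * (a j) / (x j) ^ 3) else 0) (x j) := by
    intro l
    rcases eq_or_ne l j with h | h
    · subst h
      rw [if_pos rfl]
      have h1 := (hasDerivAt_const (x l) (a l)).div ((hasDerivAt_upd x l l).pow 2)
        (by simpa using pow_ne_zero 2 (hx l))
      refine h1.congr_deriv ?_
      simp only [Function.update_eq_self, Pi.pow_apply, Function.update_self, pow_one, if_pos rfl, eq_self_iff_true, if_true]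
      field_simp [hx l]
      ring
    · have h2 : (fun t => a l / (Function.update x j t l) ^ 2) = fun _ => a l / (x l) ^ 2 := by
        funext t; simp [Function.update_of_ne h]
      rw [h2, if_neg h]; exact hasDerivAt_const _ _
  have h : HasDerivAt
      (fun t => ((∑ l, (p l) ^ 2) + ∑ l, a l / (Function.update x j t l) ^ 2) / 2)
      ((∑ l : Fin n, if l = j then -(2 * (a j) / (x j) ^ 3) else 0) / 2) (x j) :=
    ((HasDerivAt.fun_sum (fun l _ => hl l)).const_add (∑ l, (p l) ^ 2)).div_const 2
  refine h.congr_deriv ?_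
  simp only [Finset.sum_ite_eq', Finset.mem_univ, if_pos]
  ring

lemma hg1p {n : ℕ} (a : Fin n → ℝ) (x p : Fin n → ℝ) (j : Fin n) :
    HasDerivAt (fun t => ((∑ l, (Function.update p j t l) ^ 2) + ∑ l, a l / (x l) ^ 2) / 2)
      (p j) (p j) := by
  have hl : ∀ l : Fin n, HasDerivAt (fun t => (Function.update p j t l) ^ 2)
      (if l = j then 2 * p j else 0) (p j) := by
    intro l
    have h := (hasDerivAt_upd p j l).pow 2
    refine h.congr_deriv ?_
    simp only [Function.update_eq_self, pow_one, Nat.cast_ofNat]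
    split_ifs with h' <;> [subst h'; skip] <;> ring
  have h : HasDerivAt
      (fun t => ((∑ l, (Function.update p j t l) ^ 2) + ∑ l, a l / (x l) ^ 2) / 2)
      ((∑ l : Fin n, if l = j then 2 * p j else 0) / 2) (p j) :=
    ((HasDerivAt.fun_sum (fun l _ => hl l)).add_const (∑ l, a l / (x l) ^ 2)).div_const 2
  refine h.congr_deriv ?_
  simp only [Finset.sum_ite_eq', Finset.mem_univ, if_pos]
  ring

lemma hg2x {n : ℕ} (x : Fin n → ℝ) (j : Fin n) :
    HasDerivAt (fun t => (∑ l, (Function.update x j t l) ^ 2) / 2) (x j) (x j) := by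
  have hl : ∀ l : Fin n, HasDerivAt (fun t => (Function.update x j t l) ^ 2)
      (if l = j then 2 * x j else 0) (x j) := by
    intro l
    have h := (hasDerivAt_upd x j l).pow 2
    refine h.congr_deriv ?_
    simp only [Function.update_eq_self, pow_one, Nat.cast_ofNat]
    split_ifs with h' <;> [subst h'; skip] <;> ring
  have h : HasDerivAt (fun t => (∑ l, (Function.update x j t l) ^ 2) / 2)
      ((∑ l : Fin n, if l = j then 2 * x j else 0) / 2) (x j) :=
    (HasDerivAt.fun_sum (fun l _ => hl l)).div_const 2
  refine h.congr_deriv ?_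
  simp only [Finset.sum_ite_eq', Finset.mem_univ, if_pos]
  ring

lemma hg3x {n : ℕ} (x p : Fin n → ℝ) (j : Fin n) :
    HasDerivAt (fun t => (∑ l, Function.update x j t l * p l) / 2) (p j / 2) (x j) := by
  have hl : ∀ l : Fin n, HasDerivAt (fun t => Function.update x j t l * p l)
      (if l = j then p j else 0) (x j) := by
    intro l
    have h := (hasDerivAt_upd x j l).mul_const (p l)
    refine h.congr_deriv ?_
    split_ifs with h' <;> [subst h'; skip] <;> ring
  have h : HasDerivAt (fun t => (∑ l, Function.update x j t l * p l) / 2)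
      ((∑ l : Fin n, if l = j then p j else 0) / 2) (x j) :=
    (HasDerivAt.fun_sum (fun l _ => hl l)).div_const 2
  refine h.congr_deriv ?_
  simp only [Finset.sum_ite_eq', Finset.mem_univ, if_pos]

lemma hg3p {n : ℕ} (x p : Fin n → ℝ) (j : Fin n) :
    HasDerivAt (fun t => (∑ l, x l * Function.update p j t l) / 2) (x j / 2) (p j) := by
  have hl : ∀ l : Fin n, HasDerivAt (fun t => x l * Function.update p j t l)
      (if l = j then x j else 0) (p j) := by
    intro l
    have h := (hasDerivAt_upd p j l).const_mul (x l)
    refine h.congr_deriv ?_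
    split_ifs with h' <;> [subst h'; skip] <;> ring
  have h : HasDerivAt (fun t => (∑ l, x l * Function.update p j t l) / 2)
      ((∑ l : Fin n, if l = j then x j else 0) / 2) (p j) :=
    (HasDerivAt.fun_sum (fun l _ => hl l)).div_const 2
  refine h.congr_deriv ?_
  simp only [Finset.sum_ite_eq', Finset.mem_univ, if_pos]

theorem stmt6 (n : ℕ) (a : Fin n → ℝ) (m : ℕ) (hm : 2 ≤ m) (hmn : m ≤ n)
    (x p : Fin n → ℝ) (hx : ∀ j, x j ≠ 0) :
    pb n (CL n a m)
        (fun x p => ((∑ j, (p j) ^ 2) + ∑ j, a j / (x j) ^ 2) / 2) x p = 0 ∧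
    pb n (CL n a m) (fun x _ => (∑ j, (x j) ^ 2) / 2) x p = 0 ∧
    pb n (CL n a m) (fun x p => (∑ j, x j * p j) / 2) x p = 0 := by
  refine ⟨?_, ?_, ?_⟩
  · exact main_lemma a m x p hx _ (fun j => -(a j) / (x j) ^ 3) (fun j => p j)
      (fun j => (hg1x a x p hx j).deriv) (fun j => (hg1p a x p j).deriv)
      (fun i k h => key1 a i k x p h (hx i) (hx k))
  · exact main_lemma a m x p hx _ (fun j => x j) (fun _ => 0)
      (fun j => (hg2x x j).deriv) (fun j => (hasDerivAt_const (p j) _).deriv)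
      (fun i k h => key2 a i k x p h)
  · exact main_lemma a m x p hx _ (fun j => p j / 2) (fun j => x j / 2)
      (fun j => (hg3x x p j).deriv) (fun j => (hg3p x p j).deriv)
      (fun i k h => key3 a i k x p h (hx i) (hx k))
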